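/- Let Γ be a totally ordered abelian group, Γ' ⊆ Γ a convex subgroup, γ ∈ Γ cofinal for Γ', and Δ ⊊ Γ' a proper convex subgroup. Then δγ is cofinal for Γ' for every δ ∈ Δ. -/

import Mathlib

/-- A convex subgroup of a totally ordered abelian group. -/
def IsConvexSubgroup {Γ : Type*} [CommGroup Γ] [LinearOrder Γ] [IsOrderedMonoid Γ] (H : Subgroup Γ) : Prop :=
  ∀ γ δ : Γ, γ ≤ δ → δ ≤ 1 → γ ∈ H → δ ∈ H

/-- `γ` is cofinal for the subgroup `H`: for every `h ∈ H` some power `γ^n < h`. -/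
def IsCofinalFor' {Γ : Type*} [CommGroup Γ] [LinearOrder Γ] [IsOrderedMonoid Γ] (γ : Γ) (H : Subgroup Γ) : Prop :=
  ∀ h ∈ H, ∃ n : ℕ, 0 < n ∧ γ ^ n < h

theorem mul_cofinal {Γ : Type*} [CommGroup Γ] [LinearOrder Γ] [IsOrderedMonoid Γ] (Γ' Δ : Subgroup Γ)
    (hΓ' : IsConvexSubgroup Γ') (hΔ : IsConvexSubgroup Δ) (hlt : Δ < Γ')
    (γ : Γ) (hγ : IsCofinalFor' γ Γ') :
    ∀ δ ∈ Δ, IsCofinalFor' (δ * γ) Γ' := by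
  intro δ hδ h hh
  -- obtain ε ∈ Γ' \ Δ
  obtain ⟨ε₀, hε₀Γ, hε₀Δ⟩ := SetLike.exists_of_lt hlt
  -- WLOG ε < 1
  obtain ⟨ε, hεΓ, hεΔ, hε1⟩ : ∃ ε, ε ∈ Γ' ∧ ε ∉ Δ ∧ ε < 1 := by
    rcases lt_trichotomy ε₀ 1 with h1 | h1 | h1
    · exact ⟨ε₀, hε₀Γ, hε₀Δ, h1⟩
    · exact absurd (h1 ▸ hε₀Δ) (fun H => H Δ.one_mem)
    · exact ⟨ε₀⁻¹, Γ'.inv_mem hε₀Γ, fun H => hε₀Δ (by simpa using Δ.inv_mem H),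
        by simpa using h1⟩
  -- ε < d for all d ∈ Δ
  have key : ∀ d ∈ Δ, ε < d := by
    intro d hd
    by_contra hcon
    exact hεΔ (hΔ d ε (not_lt.mp hcon) hε1.le hd)
  obtain ⟨n, hn, hlt'⟩ := hγ (h * ε) (Γ'.mul_mem hh hεΓ)
  refine ⟨n, hn, ?_⟩
  have h1 : ε < δ⁻¹ ^ n := key _ (Subgroup.pow_mem Δ (Δ.inv_mem hδ) n)
  have h2 : δ ^ n * ε < 1 := by
    rw [inv_pow] at h1
    calc δ ^ n * ε < δ ^ n * (δ ^ n)⁻¹ := by exact mul_lt_mul_right h1 _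
    _ = 1 := mul_inv_cancel _
  calc (δ * γ) ^ n = δ ^ n * γ ^ n := mul_pow δ γ n
    _ < δ ^ n * (h * ε) := mul_lt_mul_right hlt' _
    _ = (δ ^ n * ε) * h := by rw [mul_comm h ε, mul_assoc]
    _ < 1 * h := mul_lt_mul_left h2 h
    _ = h := one_mul h
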